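/- Let S and A be nonempty finite types, P a transition kernel, r a reward function with 0 ≤ r(s) ≤ r_max for all s, and γ ∈ [0,1) the discount factor. Let ε > 0, and suppose for each state s ∈ S a nonempty action cluster C(s) ⊆ A with a chosen representative rep(s) ∈ C(s) is given such that for all a, a' ∈ C(s), D_KL(P(·|s,a) ‖ P(·|s,a')) < ε (with P(s'|s,a) > 0 for all s, a, s' so the KL divergences are well defined). Given any policy π, define the masked policy π_C by π_C(rep(s)|s) = Σ_{a'∈C(s)} π(a'|s), π_C(a|s) = 0 for a ∈ C(s) \ {rep(s)}, and π_C(a|s) = π(a|s) for a ∉ C(s). Then sup_{s∈S} |V^π(s) − V^{π_C}(s)| ≤ (γ · r_max / (1−γ)²) · √(2ε). -/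

import Mathlib

private lemma hasDerivAt_h (x : ℝ) (hx : 0 < x) :
    HasDerivAt (fun y => (y + 1) * Real.log y - 2 * (y - 1)) (Real.log x + 1/x - 1) x := by
  have h1 : HasDerivAt (fun y : ℝ => (y + 1) * Real.log y)
      (1 * Real.log x + (x + 1) * (1/x)) x := by
    have := ((hasDerivAt_id x).add_const 1).mul (Real.hasDerivAt_log hx.ne')
    simpa [one_div, Pi.mul_def] using this
  have h2 : HasDerivAt (fun y : ℝ => 2 * (y - 1)) 2 x := by
    simpa using ((hasDerivAt_id x).sub_const 1).const_mul 2
  have := h1.sub h2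
  refine this.congr_deriv ?_
  field_simp
  ring

private lemma h_sign : ∀ x : ℝ, 0 < x →
    (1 ≤ x → 0 ≤ (x + 1) * Real.log x - 2 * (x - 1)) ∧
    (x ≤ 1 → (x + 1) * Real.log x - 2 * (x - 1) ≤ 0) := by
  set h : ℝ → ℝ := fun y => (y + 1) * Real.log y - 2 * (y - 1) with hh
  have hmono : MonotoneOn h (Set.Ioi (0:ℝ)) := by
    apply monotoneOn_of_deriv_nonneg (convex_Ioi 0)
    · apply ContinuousOn.sub
      · exact (continuousOn_id.add continuousOn_const).mul
          (Real.continuousOn_log.mono (by intro y hy; exact ne_of_gt hy))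
      · fun_prop
    · intro y hy
      rw [interior_Ioi] at hy
      exact ((hasDerivAt_h y hy).differentiableAt).differentiableWithinAt
    · intro y hy
      rw [interior_Ioi] at hy
      rw [(hasDerivAt_h y hy).deriv]
      have : Real.log y⁻¹ ≤ y⁻¹ - 1 := Real.log_le_sub_one_of_pos (inv_pos.2 hy)
      rw [Real.log_inv] at this
      have : 1 - 1/y ≤ Real.log y := by rw [one_div]; linarith
      linarith [this]
  have h1 : h 1 = 0 := by simp [hh]
  intro x hx
  constructor
  · intro hx1
    have := hmono (Set.mem_Ioi.2 one_pos) (Set.mem_Ioi.2 hx) hx1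
    rw [h1] at this
    simpa [hh] using this
  · intro hx1
    have := hmono (Set.mem_Ioi.2 hx) (Set.mem_Ioi.2 one_pos) hx1
    rw [h1] at this
    simpa [hh] using this

private lemma hasDerivAt_g (x : ℝ) (hx : 0 < x) :
    HasDerivAt (fun y => (2*y + 4) * (y * Real.log y - y + 1) - 3 * (y - 1)^2)
      (4 * ((x + 1) * Real.log x - 2 * (x - 1))) x := by
  have h1 : HasDerivAt (fun y : ℝ => (2*y + 4) * (y * Real.log y - y + 1))
      (2 * (x * Real.log x - x + 1) + (2*x + 4) * ((Real.log x + 1) - 1)) x := by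
    have ha : HasDerivAt (fun y : ℝ => 2*y + 4) 2 x := by
      simpa using ((hasDerivAt_id x).const_mul 2).add_const 4
    have hb : HasDerivAt (fun y : ℝ => y * Real.log y - y + 1)
        ((Real.log x + 1) - 1) x := by
      simpa using ((Real.hasDerivAt_mul_log hx.ne').sub (hasDerivAt_id x)).add_const 1
    simpa [Pi.mul_def] using ha.mul hb
  have h2 : HasDerivAt (fun y : ℝ => 3 * (y - 1)^2) (3 * (2 * (x-1))) x := by
    have := (((hasDerivAt_id x).sub_const 1).pow 2).const_mul 3
    simpa using this
  have := h1.sub h2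
  refine this.congr_deriv ?_
  ring

private lemma key_ineq (x : ℝ) (hx : 0 < x) :
    3 * (x - 1)^2 ≤ (2*x + 4) * (x * Real.log x - x + 1) := by
  set g : ℝ → ℝ := fun y => (2*y + 4) * (y * Real.log y - y + 1) - 3 * (y - 1)^2 with hg
  have hgcont : ContinuousOn g (Set.Ioi (0:ℝ)) := by
    apply ContinuousOn.sub
    · apply ContinuousOn.mul
      · fun_prop
      · apply ContinuousOn.add
        · apply ContinuousOn.sub
          · exact continuousOn_id.mul
              (Real.continuousOn_log.mono (by intro y hy; exact ne_of_gt hy))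
          · fun_prop
        · fun_prop
    · fun_prop
  have hg1 : g 1 = 0 := by simp [hg]
  suffices h : 0 ≤ g x by simpa [hg] using h
  rcases le_total 1 x with hx1 | hx1
  · have hmono : MonotoneOn g (Set.Ici (1:ℝ)) := by
      apply monotoneOn_of_deriv_nonneg (convex_Ici 1)
      · exact hgcont.mono (fun y hy => Set.mem_Ioi.2 (lt_of_lt_of_le one_pos hy))
      · intro y hy
        rw [interior_Ici] at hy
        have hy0 : (0:ℝ) < y := lt_trans one_pos hy
        exact ((hasDerivAt_g y hy0).differentiableAt).differentiableWithinAt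
      · intro y hy
        rw [interior_Ici] at hy
        have hy0 : (0:ℝ) < y := lt_trans one_pos hy
        rw [(hasDerivAt_g y hy0).deriv]
        have := (h_sign y hy0).1 hy.le
        linarith
    have := hmono (Set.mem_Ici.2 le_rfl) (Set.mem_Ici.2 hx1) hx1
    rw [hg1] at this; exact this
  · have hanti : AntitoneOn g (Set.Ioc (0:ℝ) 1) := by
      apply antitoneOn_of_deriv_nonpos (convex_Ioc 0 1)
      · exact hgcont.mono (fun y hy => hy.1)
      · intro y hy
        rw [interior_Ioc] at hy
        exact ((hasDerivAt_g y hy.1).differentiableAt).differentiableWithinAt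
      · intro y hy
        rw [interior_Ioc] at hy
        rw [(hasDerivAt_g y hy.1).deriv]
        have := (h_sign y hy.1).2 hy.2.le
        linarith
    have := hanti (Set.mem_Ioc.2 ⟨hx, hx1⟩) (Set.mem_Ioc.2 ⟨one_pos, le_rfl⟩) hx1
    rw [hg1] at this; exact this

private lemma pinsker_fin {S : Type*} [Fintype S] (p q : S → ℝ)
    (hp : ∀ s, 0 < p s) (hq : ∀ s, 0 < q s)
    (hp1 : ∑ s, p s = 1) (hq1 : ∑ s, q s = 1) :
    ∑ s, |p s - q s| ≤ Real.sqrt (2 * ∑ s, p s * Real.log (p s / q s)) := by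
  set f : S → ℝ := fun s => Real.sqrt ((2 * p s + 4 * q s) / 3) with hf
  set g : S → ℝ := fun s => |p s - q s| / f s with hg
  have hfpos : ∀ s, 0 < f s := fun s => Real.sqrt_pos.2 (by have := hp s; have := hq s; positivity)
  have hfg : ∀ s, f s * g s = |p s - q s| := by
    intro s; rw [hg]; exact mul_div_cancel₀ _ (hfpos s).ne'
  have hfsq : ∀ s, (f s)^2 = (2 * p s + 4 * q s) / 3 := by
    intro s; rw [hf]
    exact Real.sq_sqrt (by have := hp s; have := hq s; positivity)
  have hsumf : ∑ s, (f s)^2 = 2 := by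
    simp only [hfsq]
    rw [← Finset.sum_div, Finset.sum_add_distrib, ← Finset.mul_sum, ← Finset.mul_sum,
      hp1, hq1]
    norm_num
  have hgsq : ∀ s, (g s)^2 ≤ p s * Real.log (p s / q s) - p s + q s := by
    intro s
    have hq0 := hq s
    have hx := key_ineq (p s / q s) (div_pos (hp s) hq0)
    have hkey : 3 * (p s - q s)^2
        ≤ (2 * p s + 4 * q s) * (p s * Real.log (p s / q s) - p s + q s) := by
      have h2 : (p s / q s - 1) * q s = p s - q s := by field_simp
      have h3 : (2 * (p s / q s) + 4) * q s = 2 * p s + 4 * q s := by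
        field_simp
      have h4 : ((p s / q s) * Real.log (p s / q s) - p s / q s + 1) * q s
          = p s * Real.log (p s / q s) - p s + q s := by
        field_simp
      calc 3 * (p s - q s)^2 = (3 * (p s / q s - 1)^2) * q s^2 := by
            rw [← h2]; ring
        _ ≤ ((2*(p s/q s)+4) * ((p s/q s) * Real.log (p s/q s) - p s/q s + 1)) * q s^2 :=
            mul_le_mul_of_nonneg_right hx (sq_nonneg _)
        _ = ((2 * (p s / q s) + 4) * q s) *
            (((p s / q s) * Real.log (p s / q s) - p s / q s + 1) * q s) := by ring
        _ = (2 * p s + 4 * q s) * (p s * Real.log (p s / q s) - p s + q s) := by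
            rw [h3, h4]
    have hgsq' : (g s)^2 = (p s - q s)^2 / ((2 * p s + 4 * q s) / 3) := by
      rw [hg, div_pow, hfsq, sq_abs]
    rw [hgsq', div_le_iff₀ (by have := hp s; positivity)]
    nlinarith [hkey]
  have hsumg : ∑ s, (g s)^2 ≤ ∑ s, p s * Real.log (p s / q s) := by
    calc ∑ s, (g s)^2 ≤ ∑ s, (p s * Real.log (p s / q s) - p s + q s) :=
          Finset.sum_le_sum (fun s _ => hgsq s)
      _ = ∑ s, p s * Real.log (p s / q s) := by
          rw [Finset.sum_add_distrib, Finset.sum_sub_distrib, hp1, hq1]; ring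
  have hCS := Finset.sum_mul_sq_le_sq_mul_sq Finset.univ f g
  have habs : (∑ s, |p s - q s|)^2 ≤ 2 * ∑ s, p s * Real.log (p s / q s) := by
    have h1 : ∑ s, f s * g s = ∑ s, |p s - q s| := Finset.sum_congr rfl (fun s _ => hfg s)
    rw [h1] at hCS
    calc (∑ s, |p s - q s|)^2 ≤ (∑ s, (f s)^2) * ∑ s, (g s)^2 := hCS
      _ ≤ 2 * ∑ s, p s * Real.log (p s / q s) := by
          rw [hsumf]
          exact mul_le_mul_of_nonneg_left hsumg (by norm_num)
  have hnn : 0 ≤ ∑ s, |p s - q s| := Finset.sum_nonneg (fun s _ => abs_nonneg _)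
  exact (Real.le_sqrt hnn (le_trans (sq_nonneg _) habs)).2 habs


/-- Lemma 1: masking a cluster of actions whose next-state distributions are
pairwise within ε in KL divergence changes the value function of any policy by
at most γ·r_max·√(2ε)/(1-γ)², uniformly over states. -/
theorem masked_policy_value_diff_le
    {S A : Type*} [Fintype S] [Fintype A] [DecidableEq S] [Nonempty S] [Nonempty A] [DecidableEq A]
    (P : S → A → S → ℝ)
    (hP0 : ∀ s a s', 0 < P s a s')
    (hP1 : ∀ s a, ∑ s', P s a s' = 1)
    (r : S → ℝ) (rmax : ℝ)
    (hr : ∀ s, 0 ≤ r s ∧ r s ≤ rmax)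
    (γ : ℝ) (hγ0 : 0 ≤ γ) (hγ1 : γ < 1)
    (ε : ℝ) (hε : 0 < ε)
    (C : S → Finset A) (hC : ∀ s, (C s).Nonempty)
    (rep : S → A) (hrep : ∀ s, rep s ∈ C s)
    (hKL : ∀ s, ∀ a ∈ C s, ∀ a' ∈ C s,
      ∑ s', P s a s' * Real.log (P s a s' / P s a' s') < ε)
    (π : S → A → ℝ)
    (hπ0 : ∀ s a, 0 ≤ π s a)
    (hπ1 : ∀ s, ∑ a, π s a = 1)
    (πC : S → A → ℝ)
    (hπC : ∀ s a, πC s a =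
      if a = rep s then ∑ a' ∈ C s, π s a'
      else if a ∈ C s then 0 else π s a)
    (Q QC : Matrix S S ℝ)
    (hQ : ∀ s s', Q s s' = ∑ a, π s a * P s a s')
    (hQC : ∀ s s', QC s s' = ∑ a, πC s a * P s a s') :
    ∀ s : S,
      |(∑' t : ℕ, γ ^ t * ∑ s', (Q ^ t) s s' * r s')
        - ∑' t : ℕ, γ ^ t * ∑ s', (QC ^ t) s s' * r s'|
      ≤ γ * rmax / (1 - γ) ^ 2 * Real.sqrt (2 * ε) := by
  obtain ⟨s₀⟩ := ‹Nonempty S›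
  have hrmax : 0 ≤ rmax := le_trans (hr s₀).1 (hr s₀).2
  set δ := Real.sqrt (2 * ε) with hδ
  have hδ0 : 0 ≤ δ := Real.sqrt_nonneg _
  -- πC properties
  have hπC0 : ∀ s a, 0 ≤ πC s a := by
    intro s a
    rw [hπC]
    split_ifs with h1 h2
    · exact Finset.sum_nonneg fun a' _ => hπ0 s a'
    · exact le_refl 0
    · exact hπ0 s a
  -- QC row formula
  have hQCsum : ∀ s s', QC s s'
      = (∑ a ∈ C s, π s a) * P s (rep s) s' + ∑ a ∈ (C s)ᶜ, π s a * P s a s' := by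
    intro s s'
    rw [hQC, ← Finset.sum_add_sum_compl (C s) (fun a => πC s a * P s a s')]
    congr 1
    · rw [Finset.sum_eq_single_of_mem (rep s) (hrep s)]
      · rw [hπC, if_pos rfl]
      · intro b hb hbne
        rw [hπC, if_neg hbne, if_pos hb, zero_mul]
    · apply Finset.sum_congr rfl
      intro a ha
      have ha' : a ∉ C s := by simpa using ha
      have hane : a ≠ rep s := fun h => ha' (h ▸ hrep s)
      rw [hπC, if_neg hane, if_neg ha']
  -- difference formula
  have hdiff : ∀ s s', Q s s' - QC s s'
      = ∑ a ∈ C s, π s a * (P s a s' - P s (rep s) s') := by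
    intro s s'
    rw [hQ, hQCsum, ← Finset.sum_add_sum_compl (C s) (fun a => π s a * P s a s'),
      Finset.sum_mul]
    simp only [mul_sub, Finset.sum_sub_distrib]
    ring
  -- stochasticity
  have hQ0' : ∀ s s', 0 ≤ Q s s' := by
    intro s s'; rw [hQ]
    exact Finset.sum_nonneg fun a _ => mul_nonneg (hπ0 s a) (hP0 s a s').le
  have hQC0' : ∀ s s', 0 ≤ QC s s' := by
    intro s s'; rw [hQC]
    exact Finset.sum_nonneg fun a _ => mul_nonneg (hπC0 s a) (hP0 s a s').le
  have hQ1 : ∀ s, ∑ s', Q s s' = 1 := by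
    intro s
    simp only [hQ]
    rw [Finset.sum_comm]
    calc ∑ a, ∑ s', π s a * P s a s' = ∑ a, π s a * ∑ s', P s a s' := by
          simp [Finset.mul_sum]
      _ = 1 := by simp only [hP1, mul_one]; exact hπ1 s
  have hQC1 : ∀ s, ∑ s', QC s s' = 1 := by
    intro s
    simp only [hQCsum]
    rw [Finset.sum_add_distrib, ← Finset.mul_sum, hP1, mul_one, Finset.sum_comm]
    calc (∑ a ∈ C s, π s a) + ∑ a ∈ (C s)ᶜ, ∑ s', π s a * P s a s'
        = (∑ a ∈ C s, π s a) + ∑ a ∈ (C s)ᶜ, π s a := by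
          congr 1
          apply Finset.sum_congr rfl
          intro a _
          rw [← Finset.mul_sum, hP1, mul_one]
      _ = 1 := by rw [Finset.sum_add_sum_compl]; exact hπ1 s
  -- L1 row bound
  have hrowKL : ∀ s, ∀ a ∈ C s, ∑ s', |P s a s' - P s (rep s) s'| ≤ δ := by
    intro s a ha
    refine le_trans (pinsker_fin (P s a) (P s (rep s)) (hP0 s a) (hP0 s (rep s))
      (hP1 s a) (hP1 s (rep s))) ?_
    apply Real.sqrt_le_sqrt
    have := hKL s a ha (rep s) (hrep s)
    linarith
  have hrow : ∀ s, ∑ s', |Q s s' - QC s s'| ≤ δ := by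
    intro s
    have hπle : ∑ a ∈ C s, π s a ≤ 1 := by
      rw [← hπ1 s]
      exact Finset.sum_le_sum_of_subset_of_nonneg (Finset.subset_univ _)
        (fun a _ _ => hπ0 s a)
    calc ∑ s', |Q s s' - QC s s'|
        = ∑ s', |∑ a ∈ C s, π s a * (P s a s' - P s (rep s) s')| := by
          simp only [hdiff]
      _ ≤ ∑ s', ∑ a ∈ C s, |π s a * (P s a s' - P s (rep s) s')| :=
          Finset.sum_le_sum fun s' _ => Finset.abs_sum_le_sum_abs _ _
      _ = ∑ a ∈ C s, π s a * ∑ s', |P s a s' - P s (rep s) s'| := by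
          rw [Finset.sum_comm]
          apply Finset.sum_congr rfl
          intro a _
          rw [Finset.mul_sum]
          apply Finset.sum_congr rfl
          intro s' _
          rw [abs_mul, abs_of_nonneg (hπ0 s a)]
      _ ≤ ∑ a ∈ C s, π s a * δ :=
          Finset.sum_le_sum fun a ha =>
            mul_le_mul_of_nonneg_left (hrowKL s a ha) (hπ0 s a)
      _ = (∑ a ∈ C s, π s a) * δ := (Finset.sum_mul _ _ _).symm
      _ ≤ 1 * δ := mul_le_mul_of_nonneg_right hπle hδ0
      _ = δ := one_mul δ
  -- matrix power facts
  have hM0 : ∀ (M : Matrix S S ℝ), (∀ s s', 0 ≤ M s s') →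
      ∀ t s s', 0 ≤ (M ^ t) s s' := by
    intro M hM t
    induction t with
    | zero =>
      intro s s'
      rw [pow_zero]
      simp only [Matrix.one_apply]
      split_ifs <;> norm_num
    | succ t ih =>
      intro s s'
      rw [pow_succ, Matrix.mul_apply]
      exact Finset.sum_nonneg fun u _ => mul_nonneg (ih s u) (hM u s')
  have hM1 : ∀ (M : Matrix S S ℝ), (∀ s, ∑ s', M s s' = 1) →
      ∀ t s, ∑ s', (M ^ t) s s' = 1 := by
    intro M hM t
    induction t with
    | zero =>
      intro s
      rw [pow_zero]
      simp [Matrix.one_apply]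
    | succ t ih =>
      intro s
      simp only [pow_succ, Matrix.mul_apply]
      rw [Finset.sum_comm]
      calc ∑ u, ∑ s', (M ^ t) s u * M u s'
          = ∑ u, (M ^ t) s u * ∑ s', M u s' := by simp [Finset.mul_sum]
        _ = 1 := by simp only [hM, mul_one]; exact ih s
  -- value vectors
  set v : ℕ → S → ℝ := fun t s => ∑ s', (Q ^ t) s s' * r s' with hv
  set w : ℕ → S → ℝ := fun t s => ∑ s', (QC ^ t) s s' * r s' with hw
  have hvec : ∀ (M : Matrix S S ℝ), (∀ s s', 0 ≤ M s s') → (∀ s, ∑ s', M s s' = 1) →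
      ∀ s, 0 ≤ ∑ s', M s s' * r s' ∧ ∑ s', M s s' * r s' ≤ rmax := by
    intro M hM0' hM1' s
    constructor
    · exact Finset.sum_nonneg fun s' _ => mul_nonneg (hM0' s s') (hr s').1
    · calc ∑ s', M s s' * r s' ≤ ∑ s', M s s' * rmax :=
            Finset.sum_le_sum fun s' _ =>
              mul_le_mul_of_nonneg_left (hr s').2 (hM0' s s')
        _ = rmax := by rw [← Finset.sum_mul, hM1', one_mul]
  have hvb : ∀ t s, 0 ≤ v t s ∧ v t s ≤ rmax :=
    fun t s => hvec (Q ^ t) (hM0 Q hQ0' t) (hM1 Q hQ1 t) s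
  have hwb : ∀ t s, 0 ≤ w t s ∧ w t s ≤ rmax :=
    fun t s => hvec (QC ^ t) (hM0 QC hQC0' t) (hM1 QC hQC1 t) s
  have hrec : ∀ (M : Matrix S S ℝ) (t : ℕ) (s : S),
      ∑ s', (M ^ (t+1)) s s' * r s' = ∑ u, M s u * ∑ s', (M ^ t) u s' * r s' := by
    intro M t s
    simp only [pow_succ', Matrix.mul_apply, Finset.sum_mul]
    rw [Finset.sum_comm]
    simp [Finset.mul_sum, mul_assoc]
  -- main induction bound
  have hkey2 : ∀ t s, |v t s - w t s| ≤ t * δ * rmax := by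
    intro t
    induction t with
    | zero => intro s; simp [hv, hw]
    | succ t ih =>
      intro s
      have hvrec : v (t+1) s = ∑ u, Q s u * v t u := hrec Q t s
      have hwrec : w (t+1) s = ∑ u, QC s u * w t u := hrec QC t s
      rw [hvrec, hwrec]
      have hdecomp : ∑ u, Q s u * v t u - ∑ u, QC s u * w t u
          = (∑ u, Q s u * (v t u - w t u)) + ∑ u, (Q s u - QC s u) * w t u := by
        simp only [mul_sub, sub_mul, Finset.sum_sub_distrib]
        ring
      rw [hdecomp]
      have h1 : |∑ u, Q s u * (v t u - w t u)| ≤ t * δ * rmax := by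
        calc |∑ u, Q s u * (v t u - w t u)| ≤ ∑ u, |Q s u * (v t u - w t u)| :=
              Finset.abs_sum_le_sum_abs _ _
          _ = ∑ u, Q s u * |v t u - w t u| := by
              apply Finset.sum_congr rfl
              intro u _
              rw [abs_mul, abs_of_nonneg (hQ0' s u)]
          _ ≤ ∑ u, Q s u * (t * δ * rmax) :=
              Finset.sum_le_sum fun u _ =>
                mul_le_mul_of_nonneg_left (ih u) (hQ0' s u)
          _ = t * δ * rmax := by rw [← Finset.sum_mul, hQ1, one_mul]
      have h2 : |∑ u, (Q s u - QC s u) * w t u| ≤ δ * rmax := by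
        calc |∑ u, (Q s u - QC s u) * w t u| ≤ ∑ u, |(Q s u - QC s u) * w t u| :=
              Finset.abs_sum_le_sum_abs _ _
          _ = ∑ u, |Q s u - QC s u| * |w t u| := by simp [abs_mul]
          _ ≤ ∑ u, |Q s u - QC s u| * rmax :=
              Finset.sum_le_sum fun u _ =>
                mul_le_mul_of_nonneg_left
                  (abs_le.2 ⟨by linarith [(hwb t u).1], (hwb t u).2⟩ :
                    |w t u| ≤ rmax)
                  (abs_nonneg _)
          _ = (∑ u, |Q s u - QC s u|) * rmax := (Finset.sum_mul _ _ _).symm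
          _ ≤ δ * rmax := mul_le_mul_of_nonneg_right (hrow s) hrmax
      have hcast : ((t+1 : ℕ) : ℝ) * δ * rmax = (t : ℝ) * δ * rmax + δ * rmax := by
        push_cast; ring
      calc |(∑ u, Q s u * (v t u - w t u)) + ∑ u, (Q s u - QC s u) * w t u|
          ≤ |∑ u, Q s u * (v t u - w t u)| + |∑ u, (Q s u - QC s u) * w t u| :=
            abs_add_le _ _
        _ ≤ (t : ℝ) * δ * rmax + δ * rmax := add_le_add h1 h2
        _ = ((t+1 : ℕ) : ℝ) * δ * rmax := hcast.symm
  -- tsum part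
  intro s
  show |(∑' t : ℕ, γ ^ t * v t s) - ∑' t : ℕ, γ ^ t * w t s|
      ≤ γ * rmax / (1 - γ) ^ 2 * δ
  have hγpow : ∀ t : ℕ, (0:ℝ) ≤ γ ^ t := fun t => pow_nonneg hγ0 t
  have hgeo : Summable (fun t : ℕ => γ ^ t * rmax) :=
    (summable_geometric_of_lt_one hγ0 hγ1).mul_right rmax
  have hsumv : Summable (fun t : ℕ => γ ^ t * v t s) :=
    Summable.of_nonneg_of_le (fun t => mul_nonneg (hγpow t) (hvb t s).1)
      (fun t => mul_le_mul_of_nonneg_left (hvb t s).2 (hγpow t)) hgeo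
  have hsumw : Summable (fun t : ℕ => γ ^ t * w t s) :=
    Summable.of_nonneg_of_le (fun t => mul_nonneg (hγpow t) (hwb t s).1)
      (fun t => mul_le_mul_of_nonneg_left (hwb t s).2 (hγpow t)) hgeo
  have hγnorm : ‖γ‖ < 1 := by rw [Real.norm_eq_abs, abs_of_nonneg hγ0]; exact hγ1
  have hbsum : Summable (fun t : ℕ => γ ^ t * ((t:ℝ) * δ * rmax)) := by
    have h := (summable_pow_mul_geometric_of_norm_lt_one 1 hγnorm (R := ℝ)).mul_right (δ * rmax)
    exact h.congr (fun t => by push_cast; ring)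
  have hterm : ∀ t : ℕ, |γ ^ t * v t s - γ ^ t * w t s| ≤ γ ^ t * ((t:ℝ) * δ * rmax) := by
    intro t
    have : |γ ^ t * v t s - γ ^ t * w t s| = γ ^ t * |v t s - w t s| := by
      rw [← mul_sub, abs_mul, abs_of_nonneg (hγpow t)]
    rw [this]
    exact mul_le_mul_of_nonneg_left (hkey2 t s) (hγpow t)
  have habssum : Summable (fun t : ℕ => |γ ^ t * v t s - γ ^ t * w t s|) :=
    Summable.of_nonneg_of_le (fun t => abs_nonneg _) hterm hbsum
  calc |(∑' t : ℕ, γ ^ t * v t s) - ∑' t : ℕ, γ ^ t * w t s|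
      = |∑' t : ℕ, (γ ^ t * v t s - γ ^ t * w t s)| := by
        rw [Summable.tsum_sub hsumv hsumw]
    _ ≤ ∑' t : ℕ, |γ ^ t * v t s - γ ^ t * w t s| := by
        simpa [Real.norm_eq_abs] using
          norm_tsum_le_tsum_norm (f := fun t : ℕ => γ ^ t * v t s - γ ^ t * w t s)
            (by simpa [Real.norm_eq_abs] using habssum)
    _ ≤ ∑' t : ℕ, γ ^ t * ((t:ℝ) * δ * rmax) := Summable.tsum_le_tsum hterm habssum hbsum
    _ = (∑' t : ℕ, (t:ℝ) * γ ^ t) * (δ * rmax) := by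
        rw [← tsum_mul_right]
        exact tsum_congr fun t => by ring
    _ = γ / (1 - γ) ^ 2 * (δ * rmax) := by
        rw [tsum_coe_mul_geometric_of_norm_lt_one hγnorm]
    _ = γ * rmax / (1 - γ) ^ 2 * δ := by ring
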